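/- Let f : [1, +∞) → ℝ be a C²-smooth function with f(x) > 0, f''(x) > 0 and f'(x) < 0 for all x ≥ 1, and such that f(x) → 0 and f'(x) → 0 as x → +∞. Then the improper integral ∫₁^{+∞} (f''(x))^{2/3} dx converges (i.e. the function x ↦ (f''(x))^{2/3} is integrable on [1,+∞)). -/

import Mathlib

open Set Filter MeasureTheory Topology

private lemma young_aux {a x : ℝ} (ha : 0 < a) (hx : 1 ≤ x) :
    a ^ ((2:ℝ)/3) ≤ (2/3) * (x * a) + (1/3) * x ^ (-2:ℝ) := by
  have hx0 : (0:ℝ) < x := lt_of_lt_of_le one_pos hx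
  have key := Real.geom_mean_le_arith_mean2_weighted (by norm_num : (0:ℝ) ≤ 2/3)
    (by norm_num : (0:ℝ) ≤ 1/3) (mul_pos hx0 ha).le (Real.rpow_pos_of_pos hx0 (-2)).le
    (by norm_num)
  have heq : (x * a) ^ ((2:ℝ)/3) * (x ^ (-2:ℝ)) ^ ((1:ℝ)/3) = a ^ ((2:ℝ)/3) := by
    rw [Real.mul_rpow hx0.le ha.le, ← Real.rpow_mul hx0.le, mul_right_comm,
      ← Real.rpow_add hx0]
    norm_num
  calc a ^ ((2:ℝ)/3) = (x * a) ^ ((2:ℝ)/3) * (x ^ (-2:ℝ)) ^ ((1:ℝ)/3) := heq.symm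
    _ ≤ (2/3) * (x * a) + (1/3) * x ^ (-2:ℝ) := key

/-- Let `f : [1,∞) → ℝ` be `C²` with `f > 0`, `f'' > 0`, `f' < 0` on
`[1,∞)` and `f(x) → 0`, `f'(x) → 0` as `x → +∞`. Then `∫₁^∞ (f''(x))^{2/3} dx`
converges. (Here `f' = derivWithin f [1,∞)` and `f'' = derivWithin f' [1,∞)`.) -/
theorem statement14 (f : ℝ → ℝ)
    (hf : ContDiffOn ℝ 2 f (Set.Ici 1))
    (hfpos : ∀ x ∈ Set.Ici (1:ℝ), 0 < f x)
    (hf''pos : ∀ x ∈ Set.Ici (1:ℝ),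
      0 < derivWithin (derivWithin f (Set.Ici 1)) (Set.Ici 1) x)
    (hf'neg : ∀ x ∈ Set.Ici (1:ℝ), derivWithin f (Set.Ici 1) x < 0)
    (hlim : Tendsto f atTop (nhds 0))
    (hlim' : Tendsto (derivWithin f (Set.Ici 1)) atTop (nhds 0)) :
    IntegrableOn
      (fun x => (derivWithin (derivWithin f (Set.Ici 1)) (Set.Ici 1) x) ^ ((2:ℝ)/3))
      (Set.Ici 1) := by
  set f1 : ℝ → ℝ := derivWithin f (Set.Ici 1) with hf1def
  set f2 : ℝ → ℝ := derivWithin f1 (Set.Ici 1) with hf2def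
  have hu : UniqueDiffOn ℝ (Set.Ici (1:ℝ)) := uniqueDiffOn_Ici 1
  have hc1 : ContDiffOn ℝ 1 f1 (Set.Ici 1) := hf.derivWithin hu (by norm_num)
  have hcf2 : ContinuousOn f2 (Set.Ici 1) := hc1.continuousOn_derivWithin hu le_rfl
  have hcf1 : ContinuousOn f1 (Set.Ici 1) := hc1.continuousOn
  have hcf : ContinuousOn f (Set.Ici 1) := hf.continuousOn
  set g : ℝ → ℝ := fun y => y * f1 y - f y with hgdef
  have hgcont : ContinuousOn g (Set.Ici 1) := (continuousOn_id.mul hcf1).sub hcf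
  -- derivative of g at interior points
  have hderiv : ∀ x : ℝ, 1 < x → HasDerivAt g (x * f2 x) x := by
    intro x hx
    have hnb : Set.Ici (1:ℝ) ∈ 𝓝 x := Ici_mem_nhds hx
    have hfx : HasDerivAt f (f1 x) x := by
      have hd : DifferentiableAt ℝ f x :=
        (hf.differentiableOn (by norm_num)).differentiableAt hnb
      rw [hf1def, derivWithin_of_mem_nhds hnb]
      exact hd.hasDerivAt
    have hf1x : HasDerivAt f1 (f2 x) x := by
      have hd : DifferentiableAt ℝ f1 x :=
        (hc1.differentiableOn (by norm_num)).differentiableAt hnb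
      rw [hf2def, derivWithin_of_mem_nhds hnb]
      exact hd.hasDerivAt
    have h := ((hasDerivAt_id x).mul hf1x).sub hfx
    exact h.congr_deriv (by simp)
  -- g is nonpositive on Ici 1
  have hgneg : ∀ N : ℝ, 1 ≤ N → g N ≤ 0 := by
    intro N hN
    have h1 := hf'neg N hN
    have h2 := hfpos N hN
    have hN0 : (0:ℝ) < N := lt_of_lt_of_le one_pos hN
    have : N * f1 N ≤ 0 := mul_nonpos_of_nonneg_of_nonpos hN0.le h1.le
    simp only [hgdef]
    linarith
  -- interval integrability of x * f2 x
  have hint : ∀ N : ℝ, 1 ≤ N → IntervalIntegrable (fun x => x * f2 x) volume 1 N := by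
    intro N hN
    apply ContinuousOn.intervalIntegrable
    rw [uIcc_of_le hN]
    exact continuousOn_id.mul (hcf2.mono (Icc_subset_Ici_self))
  -- FTC on [1, N]
  have hFTC : ∀ N : ℝ, 1 ≤ N → ∫ x in (1:ℝ)..N, x * f2 x = g N - g 1 := by
    intro N hN
    exact intervalIntegral.integral_eq_sub_of_hasDeriv_right_of_le hN
      (hgcont.mono Icc_subset_Ici_self)
      (fun x hx => (hderiv x hx.1).hasDerivWithinAt)
      (hint N hN)
  -- integrability of x * f2 x on Ioi 1
  have h1 : IntegrableOn (fun x => x * f2 x) (Ioi 1) := by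
    apply integrableOn_Ioi_of_intervalIntegral_norm_bounded (-(g 1)) 1
      (b := fun N : ℝ => N) (l := atTop) ?_ tendsto_id
    · filter_upwards [eventually_ge_atTop (1:ℝ)] with N hN
      have hcong : EqOn (fun x => ‖x * f2 x‖) (fun x => x * f2 x) (Set.uIcc 1 N) := by
        intro x hx
        rw [uIcc_of_le hN] at hx
        have hx1 : (1:ℝ) ≤ x := hx.1
        have hx0 : (0:ℝ) < x := lt_of_lt_of_le one_pos hx1
        have hfx : 0 < f2 x := hf''pos x hx1
        simp [Real.norm_eq_abs, abs_mul, abs_of_pos hx0, abs_of_pos hfx]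
      rw [intervalIntegral.integral_congr hcong, hFTC N hN]
      linarith [hgneg N hN]
    · intro N
      rcases le_or_gt N 1 with hN | hN
      · rw [Set.Ioc_eq_empty (by simpa using hN)]
        exact integrableOn_empty
      · rw [← uIoc_of_le hN.le]
        exact (intervalIntegrable_iff).1 (hint N hN.le)
  -- integrability of x ^ (-2) on Ioi 1
  have h2 : IntegrableOn (fun x : ℝ => x ^ (-2:ℝ)) (Ioi 1) :=
    (integrableOn_Ioi_rpow_iff one_pos).2 (by norm_num)
  have hbound : IntegrableOn
      (fun x => (2/3) * (x * f2 x) + (1/3) * x ^ (-2:ℝ)) (Ioi 1) :=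
    (h1.const_mul _).add (h2.const_mul _)
  rw [integrableOn_Ici_iff_integrableOn_Ioi]
  apply hbound.mono'
  · have hcont : ContinuousOn (fun x => f2 x ^ ((2:ℝ)/3)) (Ioi 1) := by
      apply ContinuousOn.rpow_const (hcf2.mono Ioi_subset_Ici_self)
      intro x hx
      exact Or.inr (by norm_num)
    exact hcont.aestronglyMeasurable measurableSet_Ioi
  · filter_upwards [ae_restrict_mem measurableSet_Ioi] with x hx
    have hx1 : (1:ℝ) ≤ x := le_of_lt hx
    have hfx : 0 < f2 x := hf''pos x hx1
    rw [Real.norm_eq_abs, abs_of_nonneg (Real.rpow_nonneg hfx.le _)]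
    exact young_aux hfx hx1
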